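/- Let f(z) = ∑_{k=0}^∞ a_k z^k be analytic on the open unit disk D with |f(z)| < 1 for all z ∈ D, and let N ≥ 1 be an integer. If 0 ≤ r < 1 satisfies (1+r)r^N ≤ (1-r)^2, then for every z ∈ ℂ with |z| = r one has |f(z)|^2 + ∑_{k=N}^∞ |a_k| r^k ≤ 1. (In particular this holds for all r ≤ R_N', where R_N' is the positive root of (1+r)r^N - (1-r)^2 = 0.) -/

import Mathlib

open Metric
open Complex
set_option maxHeartbeats 1000000

lemma normSq_mobius_identity (c v : ℂ) :
    normSq (1 - (starRingEnd ℂ) c * v) - normSq (c - v) = (1 - normSq c) * (1 - normSq v) := by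
  simp only [normSq_apply, sub_re, sub_im, mul_re, mul_im, one_re, one_im, conj_re, conj_im]
  ring

lemma denom_ne (c v : ℂ) (hc : ‖c‖ < 1) (hv : ‖v‖ < 1) :
    1 - (starRingEnd ℂ) c * v ≠ 0 := by
  intro h
  have h2 : ‖(starRingEnd ℂ) c * v‖ = ‖c‖ * ‖v‖ := by
    rw [norm_mul, Complex.norm_conj]
  have h3 : ‖c‖ * ‖v‖ < 1 := by
    nlinarith [norm_nonneg c, norm_nonneg v]
  have : (1 : ℂ) = (starRingEnd ℂ) c * v := by linear_combination h
  rw [← this] at h2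
  simp at h2
  nlinarith

lemma mobius_lt (c v : ℂ) (hc : ‖c‖ < 1) (hv : ‖v‖ < 1) :
    ‖(c - v) / (1 - (starRingEnd ℂ) c * v)‖ < 1 := by
  rw [norm_div, div_lt_one (by
    simpa [norm_pos_iff] using denom_ne c v hc hv)]
  have h1 := normSq_mobius_identity c v
  have h2 : 0 < (1 - normSq c) * (1 - normSq v) := by
    have e1 := Complex.sq_norm c; have e2 := Complex.sq_norm v
    have : normSq c < 1 := by nlinarith [norm_nonneg c]
    have : normSq v < 1 := by nlinarith [norm_nonneg v]
    nlinarith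
  have h3 : normSq (c - v) < normSq (1 - (starRingEnd ℂ) c * v) := by linarith
  have := Complex.sq_norm (c - v)
  have := Complex.sq_norm (1 - (starRingEnd ℂ) c * v)
  nlinarith [norm_nonneg (c-v), norm_nonneg (1 - (starRingEnd ℂ) c * v)]

lemma schwarz_pick_deriv (F : ℂ → ℂ) (hd : DifferentiableOn ℂ F (ball 0 1))
    (hb : ∀ w ∈ ball 0 1, ‖F w‖ < 1) :
    ‖deriv F 0‖ ≤ 1 - ‖F 0‖ ^ 2 := by
  have h0 : (0:ℂ) ∈ ball (0:ℂ) 1 := mem_ball_self one_pos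
  set c := F 0 with hc0
  have hc : ‖c‖ < 1 := hb 0 h0
  set g : ℂ → ℂ := fun w => (c - F w) / (1 - (starRingEnd ℂ) c * F w) with hg
  have hgd : DifferentiableOn ℂ g (ball 0 1) := by
    apply DifferentiableOn.div
    · exact (differentiableOn_const c).sub hd
    · exact (differentiableOn_const 1).sub ((differentiableOn_const _).mul hd)
    · exact fun w hw => denom_ne c (F w) hc (hb w hw)
  have hmaps : Set.MapsTo g (ball 0 1) (ball 0 1) := fun w hw => by
    simpa only [mem_ball_zero_iff] using mobius_lt c (F w) hc (hb w hw)
  have hg0 : g 0 = 0 := by simp [hg, ← hc0]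
  have hder : ‖deriv g 0‖ ≤ 1 :=
    Complex.norm_deriv_le_one_of_mapsTo_ball hgd (hmaps.mono_right (by rw [hg0]; exact ball_subset_closedBall)) one_pos
  -- compute deriv g 0
  set d := deriv F 0 with hd0
  have hF : HasDerivAt F d 0 :=
    (hd.differentiableAt (isOpen_ball.mem_nhds h0)).hasDerivAt
  have hnum : HasDerivAt (fun w => c - F w) (-d) 0 := hF.const_sub c
  have hden : HasDerivAt (fun w => 1 - (starRingEnd ℂ) c * F w) (-((starRingEnd ℂ) c * d)) 0 :=
    (hF.const_mul ((starRingEnd ℂ) c)).const_sub 1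
  have hne : 1 - (starRingEnd ℂ) c * F 0 ≠ 0 := by
    rw [← hc0]; exact denom_ne c c hc hc
  have hgder : HasDerivAt g
      ((-d * (1 - (starRingEnd ℂ) c * F 0) - (c - F 0) * -((starRingEnd ℂ) c * d)) /
        (1 - (starRingEnd ℂ) c * F 0) ^ 2) 0 := hnum.div hden hne
  have hval : deriv g 0 = -d / (1 - (starRingEnd ℂ) c * c) := by
    rw [hgder.deriv, ← hc0, sub_self, zero_mul, sub_zero, pow_two, ← div_div,
      mul_div_cancel_right₀ _ (denom_ne c c hc hc)]
  have hcc : 1 - (starRingEnd ℂ) c * c = ((1 - ‖c‖ ^ 2 : ℝ) : ℂ) := by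
    rw [← Complex.normSq_eq_conj_mul_self, ← Complex.sq_norm]
    push_cast
    ring
  have habs : ‖deriv g 0‖ = ‖d‖ / (1 - ‖c‖ ^ 2) := by
    rw [hval, hcc, norm_div, norm_neg, Complex.norm_real, Real.norm_eq_abs,
      abs_of_pos (by nlinarith [norm_nonneg c] : (0:ℝ) < 1 - ‖c‖ ^ 2)]
  rw [habs] at hder
  have hpos : (0:ℝ) < 1 - ‖c‖ ^ 2 := by nlinarith [norm_nonneg c]
  calc ‖d‖ ≤ 1 * (1 - ‖c‖ ^ 2) := by
        rw [div_le_iff₀ hpos] at hder; linarith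
    _ = 1 - ‖c‖ ^ 2 := one_mul _

lemma schwarz_pick_val (F : ℂ → ℂ) (hd : DifferentiableOn ℂ F (ball 0 1))
    (hb : ∀ w ∈ ball 0 1, ‖F w‖ < 1) (z : ℂ) (hz : ‖z‖ < 1) :
    ‖F z‖ * (1 + ‖F 0‖ * ‖z‖) ≤ ‖F 0‖ + ‖z‖ := by
  have h0 : (0:ℂ) ∈ ball (0:ℂ) 1 := mem_ball_self one_pos
  have hzb : z ∈ ball (0:ℂ) 1 := by simpa [mem_ball_zero_iff] using hz
  set c := F 0 with hc0
  have hc : ‖c‖ < 1 := hb 0 h0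
  set g : ℂ → ℂ := fun w => (c - F w) / (1 - (starRingEnd ℂ) c * F w) with hg
  have hgd : DifferentiableOn ℂ g (ball 0 1) := by
    apply DifferentiableOn.div
    · exact (differentiableOn_const c).sub hd
    · exact (differentiableOn_const 1).sub ((differentiableOn_const _).mul hd)
    · exact fun w hw => denom_ne c (F w) hc (hb w hw)
  have hmaps : Set.MapsTo g (ball 0 1) (ball 0 1) := fun w hw => by
    simpa only [mem_ball_zero_iff] using mobius_lt c (F w) hc (hb w hw)
  have hg0 : g 0 = 0 := by simp [hg, ← hc0]
  have hsch : ‖g z‖ ≤ ‖z‖ := Complex.norm_le_norm_of_mapsTo_ball hgd (hmaps.mono_right ball_subset_closedBall) hg0 hz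
  have hne : 1 - (starRingEnd ℂ) c * F z ≠ 0 := denom_ne c (F z) hc (hb z hzb)
  have habs : ‖c - F z‖ ≤ ‖z‖ * ‖1 - (starRingEnd ℂ) c * F z‖ := by
    rw [hg, norm_div, div_le_iff₀ (by simpa [norm_pos_iff] using hne)] at hsch
    exact hsch
  set A := ‖c‖ with hA
  set T := ‖F z‖ with hT
  set r := ‖z‖ with hr
  have hA0 : 0 ≤ A := norm_nonneg c
  have hT0 : 0 ≤ T := norm_nonneg _
  have hr0 : 0 ≤ r := norm_nonneg _
  have hT1 : T < 1 := hb z hzb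
  -- squared inequality
  have hsq : normSq (c - F z) ≤ r ^ 2 * normSq (1 - (starRingEnd ℂ) c * F z) := by
    have := Complex.sq_norm (c - F z)
    have := Complex.sq_norm (1 - (starRingEnd ℂ) c * F z)
    nlinarith [norm_nonneg (c - F z), norm_nonneg (1 - (starRingEnd ℂ) c * F z),
      mul_le_mul_of_nonneg_left habs (norm_nonneg (c - F z))]
  have hid := normSq_mobius_identity c (F z)
  have hQ1 : (T - A) ^ 2 ≤ normSq (c - F z) := by
    have h1 : |T - A| ≤ ‖F z - c‖ := abs_norm_sub_norm_le (F z) c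
    rw [norm_sub_rev] at h1
    have h2 := Complex.sq_norm (c - F z)
    have h3 : (T - A) ^ 2 ≤ ‖c - F z‖ ^ 2 := by
      have := abs_nonneg (T - A)
      nlinarith [le_abs_self (T - A), neg_abs_le (T - A), norm_nonneg (c - F z)]
    linarith
  have hsqc : normSq c = A ^ 2 := by rw [← Complex.sq_norm]
  have hsqT : normSq (F z) = T ^ 2 := by rw [← Complex.sq_norm]
  rw [hsqc, hsqT] at hid
  -- main: (T-A)^2 (1-r^2) ≤ r^2 (1-A^2)(1-T^2)
  have h6 : r ^ 2 * (normSq (1 - (starRingEnd ℂ) c * F z) - normSq (c - F z))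
      = r ^ 2 * ((1 - A ^ 2) * (1 - T ^ 2)) := by rw [hid]
  have h5 : normSq (c - F z) * (1 - r ^ 2) ≤ r ^ 2 * ((1 - A ^ 2) * (1 - T ^ 2)) := by
    nlinarith [hsq, h6]
  have hmain : (T - A) ^ 2 * (1 - r ^ 2) ≤ r ^ 2 * (1 - A ^ 2) * (1 - T ^ 2) := by
    nlinarith [mul_le_mul_of_nonneg_right hQ1 (by nlinarith : (0:ℝ) ≤ 1 - r ^ 2), h5]
  by_contra hcon
  push_neg at hcon
  have hTA : T * A < 1 := by nlinarith
  have pos1 : 0 < T * (1 + A * r) - (A + r) := by linarith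
  have pos2 : 0 < T * (1 - A * r) - (A - r) := by
    nlinarith [mul_nonneg hr0 (le_of_lt (sub_pos.2 hTA))]
  nlinarith [mul_pos pos1 pos2, hmain]

section helpers
variable (a : ℕ → ℂ) (f : ℂ → ℂ)

lemma coeff_bdd (hsum : ∀ z ∈ ball (0:ℂ) 1, HasSum (fun m : ℕ => a m * z ^ m) (f z))
    (s : ℝ) (h0 : 0 ≤ s) (h1 : s < 1) :
    ∃ C : ℝ, ∀ m, ‖a m‖ * s ^ m ≤ C := by
  have hs : (s:ℂ) ∈ ball (0:ℂ) 1 := by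
    simp [mem_ball_zero_iff, Complex.norm_real, _root_.abs_of_nonneg h0, h1]
  have htend := (hsum _ hs).summable.tendsto_atTop_zero.norm
  rw [norm_zero] at htend
  obtain ⟨C, hC⟩ := htend.bddAbove_range
  refine ⟨C, fun m => ?_⟩
  have := hC (Set.mem_range_self m)
  simpa [norm_mul, norm_pow, Complex.norm_real,
    _root_.abs_of_nonneg h0] using this

lemma exists_s (k : ℕ) (hk : 1 ≤ k) (r : ℝ) (h0 : 0 ≤ r) (h1 : r < 1) :
    ∃ s : ℝ, 0 ≤ s ∧ s < 1 ∧ r ≤ s ^ k := by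
  have hk0 : (0:ℝ) < k := by exact_mod_cast Nat.pos_of_ne_zero (by omega)
  have hk' : (1:ℝ) ≤ k := by exact_mod_cast hk
  refine ⟨1 - (1 - r) / k, by
    have : (1 - r)/k ≤ 1 := by rw [div_le_one hk0]; linarith
    linarith, by
    have h1r : (0:ℝ) < 1 - r := by linarith
    have : 0 < (1 - r)/k := by positivity
    linarith, ?_⟩
  have hber := one_add_mul_le_pow (a := -((1 - r)/k)) (by
    have : (1 - r)/k ≤ 1 := by rw [div_le_one hk0]; linarith
    linarith) k
  have : 1 + (k:ℝ) * -((1 - r)/k) = r := by field_simp; ring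
  rw [this] at hber
  simpa [sub_eq_add_neg] using hber

/-- Key: the "diluted" series `∑ a (k*n) wⁿ` has a sum of modulus `< 1`. -/
lemma key_hasSum (hsum : ∀ z ∈ ball (0:ℂ) 1, HasSum (fun m : ℕ => a m * z ^ m) (f z))
    (hbound : ∀ z ∈ ball (0:ℂ) 1, ‖f z‖ < 1)
    (k : ℕ) (hk : 1 ≤ k) (w : ℂ) (hw : ‖w‖ < 1) :
    ∃ S : ℂ, HasSum (fun n : ℕ => a (k * n) * w ^ n) S ∧ ‖S‖ < 1 := by
  obtain ⟨ζ, hζ⟩ := IsAlgClosed.exists_pow_nat_eq w (n := k) (by omega)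
  have hζ1 : ‖ζ‖ < 1 := by
    by_contra h
    push_neg at h
    have : (1:ℝ) ≤ ‖ζ‖ ^ k := one_le_pow₀ h
    rw [← norm_pow, hζ] at this
    linarith
  set ω := Complex.exp (2 * Real.pi * Complex.I / k) with hω
  have hprim := Complex.isPrimitiveRoot_exp k (by omega)
  rw [← hω] at hprim
  have hωabs : ‖ω‖ = 1 := by
    have h1 : ‖ω‖ ^ k = 1 := by rw [← norm_pow, hprim.pow_eq_one, norm_one]
    have hkne : k ≠ 0 := by omega
    have h2 : ‖ω‖ ≤ 1 :=
      (pow_le_one_iff_of_nonneg (norm_nonneg ω) hkne).1 h1.le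
    have h3 : 1 ≤ ‖ω‖ :=
      (one_le_pow_iff_of_nonneg (norm_nonneg ω) hkne).1 h1.ge
    linarith
  -- each rotated point is in the ball
  have hmem : ∀ j : ℕ, (ω ^ j * ζ) ∈ ball (0:ℂ) 1 := fun j => by
    simp only [mem_ball_zero_iff, norm_mul, norm_pow, hωabs, one_pow, one_mul]
    exact hζ1
  have hj : ∀ j ∈ Finset.range k,
      HasSum (fun m : ℕ => a m * ζ ^ m * (ω ^ m) ^ j) (f (ω ^ j * ζ)) := by
    intro j _
    have h := hsum _ (hmem j)
    convert h using 2 with m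
    rw [mul_pow, ← pow_mul, ← pow_mul, mul_comm j m]
    ring
  have hS := hasSum_sum hj
  set Ssum := ∑ j ∈ Finset.range k, f (ω ^ j * ζ) with hSsum
  have hgeom : ∀ m : ℕ, ∑ j ∈ Finset.range k, (ω ^ m) ^ j
      = if k ∣ m then (k:ℂ) else 0 := by
    intro m
    by_cases hdvd : k ∣ m
    · rw [if_pos hdvd]
      have : ω ^ m = 1 := (hprim.pow_eq_one_iff_dvd m).2 hdvd
      simp [this]
    · rw [if_neg hdvd]
      have hne : ω ^ m ≠ 1 := fun h => hdvd ((hprim.pow_eq_one_iff_dvd m).1 h)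
      rw [geom_sum_eq hne, ← pow_mul, mul_comm m k, pow_mul, hprim.pow_eq_one, one_pow]
      simp
  have hS2 : HasSum (fun m : ℕ => a m * ζ ^ m * (if k ∣ m then (k:ℂ) else 0)) Ssum := by
    convert hS using 2 with m
    rw [← hgeom m, Finset.mul_sum]
  -- restrict to multiples of k
  have hinj : Function.Injective (fun n : ℕ => k * n) := fun x y h => by
    simpa [Nat.mul_left_cancel_iff (show 0 < k by omega)] using h
  have hvan : ∀ m ∉ Set.range (fun n : ℕ => k * n),
      a m * ζ ^ m * (if k ∣ m then (k:ℂ) else 0) = 0 := by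
    intro m hm
    have : ¬ k ∣ m := by
      intro ⟨c, hc⟩
      exact hm ⟨c, hc.symm⟩
    rw [if_neg this, mul_zero]
  have hS3 := (Function.Injective.hasSum_iff hinj hvan).2 hS2
  have hS4 : HasSum (fun n : ℕ => a (k * n) * w ^ n * k) Ssum := by
    convert hS3 using 2 with n
    simp only [Function.comp_apply]
    rw [if_pos ⟨n, rfl⟩, pow_mul, hζ]
  have hk0 : (k:ℂ) ≠ 0 := by exact_mod_cast (by omega : k ≠ 0)
  have hS5 : HasSum (fun n : ℕ => a (k * n) * w ^ n) (Ssum * (k:ℂ)⁻¹) := by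
    have := hS4.mul_right (k:ℂ)⁻¹
    simpa [mul_assoc, mul_inv_cancel₀ hk0] using this
  refine ⟨Ssum * (k:ℂ)⁻¹, hS5, ?_⟩
  have habs1 : ‖Ssum‖ ≤ ∑ j ∈ Finset.range k, ‖f (ω ^ j * ζ)‖ :=
    norm_sum_le _ _
  have habs2 : ∑ j ∈ Finset.range k, ‖f (ω ^ j * ζ)‖ < ∑ j ∈ Finset.range k, 1 :=
    Finset.sum_lt_sum_of_nonempty (by simp; omega) (fun j _ => hbound _ (hmem j))
  rw [Finset.sum_const, Finset.card_range, nsmul_eq_mul, mul_one] at habs2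
  have hkpos : (0:ℝ) < k := by exact_mod_cast Nat.pos_of_ne_zero (by omega)
  rw [norm_mul, norm_inv, Complex.norm_natCast]
  rw [← div_eq_mul_inv, div_lt_one hkpos]
  linarith



section helpers2
variable (a : ℕ → ℂ) (f : ℂ → ℂ)

lemma coeff_le (hsum : ∀ z ∈ ball (0:ℂ) 1, HasSum (fun m : ℕ => a m * z ^ m) (f z))
    (hbound : ∀ z ∈ ball (0:ℂ) 1, ‖f z‖ < 1)
    (k : ℕ) (hk : 1 ≤ k) :
    ‖a k‖ ≤ 1 - ‖a 0‖ ^ 2 := by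
  set G : ℂ → ℂ := fun w => ∑' n : ℕ, a (k * n) * w ^ n with hG
  set p := FormalMultilinearSeries.ofScalars ℂ (fun n => a (k * n)) with hp
  have hrad : 1 ≤ p.radius := by
    apply ENNReal.le_of_forall_nnreal_lt
    intro q hq
    have hq1 : (q:ℝ) < 1 := by exact_mod_cast hq
    obtain ⟨s, hs0, hs1, hqs⟩ := exists_s k hk q q.coe_nonneg hq1
    obtain ⟨C, hC⟩ := coeff_bdd a f hsum s hs0 hs1
    apply p.le_radius_of_bound C
    intro n
    have hnorm : ‖p n‖ = ‖a (k * n)‖ := by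
      rw [hp, FormalMultilinearSeries.ofScalars_norm]
    rw [hnorm]
    calc ‖a (k * n)‖ * (q:ℝ) ^ n
        ≤ ‖a (k * n)‖ * s ^ (k * n) := by
          apply mul_le_mul_of_nonneg_left _ (norm_nonneg _)
          calc (q:ℝ) ^ n ≤ (s ^ k) ^ n := pow_le_pow_left₀ q.coe_nonneg hqs n
            _ = s ^ (k * n) := by rw [← pow_mul]
      _ ≤ C := hC _
  have hps : HasFPowerSeriesOnBall G p 0 1 := by
    refine ⟨hrad, one_pos, ?_⟩
    intro y hy
    have hy1 : ‖y‖ < 1 := by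
      rw [mem_emetric_ball_zero_iff, ← ofReal_norm_eq_enorm, ENNReal.ofReal_lt_one] at hy
      exact_mod_cast hy
    obtain ⟨S, hS, -⟩ := key_hasSum a f hsum hbound k hk y hy1
    have hGy : G (0 + y) = S := by rw [zero_add]; exact hS.tsum_eq
    rw [hGy]
    simpa only [hp, FormalMultilinearSeries.ofScalars_apply_eq, smul_eq_mul] using hS
  have hGd : DifferentiableOn ℂ G (ball (0:ℂ) 1) := by
    have h := hps.differentiableOn
    rw [← ENNReal.coe_one, Metric.emetric_ball_nnreal] at h
    simpa using h
  have hGb : ∀ w ∈ ball (0:ℂ) 1, ‖G w‖ < 1 := by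
    intro w hw
    have hw1 : ‖w‖ < 1 := by
      rwa [mem_ball_zero_iff] at hw
    obtain ⟨S, hS, hlt⟩ := key_hasSum a f hsum hbound k hk w hw1
    rw [show G w = S from hS.tsum_eq]
    exact hlt
  have hG0 : G 0 = a 0 := by
    have h : G 0 = a (k * 0) * (0:ℂ) ^ (0:ℕ) :=
      tsum_eq_single 0 (fun n hn => by simp [zero_pow hn])
    simpa using h
  have hder : deriv G 0 = a k := by
    rw [hps.hasFPowerSeriesAt.deriv]
    have h1 : p.coeff 1 = a (k * 1) • (1:ℂ) ^ (1:ℕ) := by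
      rw [FormalMultilinearSeries.coeff, hp]
      exact FormalMultilinearSeries.ofScalars_apply_eq _ _ _
    simpa using h1
  have hfin := schwarz_pick_deriv G hGd hGb
  rwa [hder, hG0] at hfin

end helpers2


/-- Theorem 1, second part: if `f` is analytic on the unit disk with `|f| < 1` and
`(1+r)r^N ≤ (1-r)^2`, then `|f(z)|^2 + ∑_{k=N}^∞ |a_k| r^k ≤ 1` for `|z| = r`. -/
theorem bohr_rogosinski_radius_sq (f : ℂ → ℂ) (a : ℕ → ℂ)
    (hf : AnalyticOn ℂ f (ball (0:ℂ) 1))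
    (hsum : ∀ z ∈ ball (0:ℂ) 1, HasSum (fun k : ℕ => a k * z ^ k) (f z))
    (hbound : ∀ z ∈ ball (0:ℂ) 1, ‖f z‖ < 1)
    (N : ℕ) (hN : 1 ≤ N)
    (r : ℝ) (hr0 : 0 ≤ r) (hr1 : r < 1)
    (hroot : (1 + r) * r ^ N ≤ (1 - r) ^ 2)
    (z : ℂ) (hz : ‖z‖ = r) :
    ‖f z‖ ^ 2 + ∑' k : ℕ, ‖a (N + k)‖ * r ^ (N + k) ≤ 1 := by
  have hzb : z ∈ ball (0:ℂ) 1 := by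
    rw [mem_ball_zero_iff, hz]; exact hr1
  have h0b : (0:ℂ) ∈ ball (0:ℂ) 1 := mem_ball_self one_pos
  have hfd : DifferentiableOn ℂ f (ball (0:ℂ) 1) := hf.differentiableOn
  -- f 0 = a 0
  have hf0 : f 0 = a 0 := by
    have h1 := hsum 0 h0b
    have h2 : HasSum (fun m : ℕ => a m * (0:ℂ) ^ m) (a 0 * (0:ℂ) ^ (0:ℕ)) :=
      hasSum_single 0 (fun m hm => by simp [zero_pow hm])
    have := h1.unique h2
    simpa using this
  set A := ‖a 0‖ with hA
  have hA0 : 0 ≤ A := norm_nonneg _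
  have hA1 : A < 1 := by rw [hA, ← hf0]; exact hbound 0 h0b
  set t := ‖f z‖ with ht
  have ht0 : 0 ≤ t := norm_nonneg _
  -- Schwarz-Pick value bound
  have hval : t * (1 + A * r) ≤ A + r := by
    have := schwarz_pick_val f hfd hbound z (by rw [hz]; exact hr1)
    rwa [hf0, ← hA, ← ht, hz] at this
  -- coefficient bound for the tail
  have hcoeff : ∀ j : ℕ, ‖a (N + j)‖ ≤ 1 - A ^ 2 := fun j =>
    coeff_le a f hsum hbound (N + j) (by omega)
  -- tail sum estimate
  have hsummR : Summable (fun j : ℕ => (1 - A ^ 2) * r ^ (N + j)) := by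
    have : Summable (fun j : ℕ => ((1 - A ^ 2) * r ^ N) * r ^ j) :=
      (summable_geometric_of_lt_one hr0 hr1).mul_left _
    simpa [pow_add, mul_assoc] using this
  have hle : ∀ j : ℕ, ‖a (N + j)‖ * r ^ (N + j) ≤ (1 - A ^ 2) * r ^ (N + j) :=
    fun j => mul_le_mul_of_nonneg_right (hcoeff j) (pow_nonneg hr0 _)
  have hsumL : Summable (fun j : ℕ => ‖a (N + j)‖ * r ^ (N + j)) :=
    hsummR.of_nonneg_of_le
      (fun j => mul_nonneg (norm_nonneg _) (pow_nonneg hr0 _)) hle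
  set Sig := ∑' j : ℕ, ‖a (N + j)‖ * r ^ (N + j) with hSig
  have hSig0 : 0 ≤ Sig := tsum_nonneg fun j => mul_nonneg (norm_nonneg _) (pow_nonneg hr0 _)
  have htail : Sig ≤ (1 - A ^ 2) * r ^ N * (1 - r)⁻¹ := by
    have h1 : Sig ≤ ∑' j : ℕ, (1 - A ^ 2) * r ^ (N + j) := Summable.tsum_le_tsum hle hsumL hsummR
    have h2 : ∑' j : ℕ, (1 - A ^ 2) * r ^ (N + j) = (1 - A ^ 2) * r ^ N * (1 - r)⁻¹ := by
      have h3 : (fun j : ℕ => (1 - A ^ 2) * r ^ (N + j))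
          = fun j : ℕ => ((1 - A ^ 2) * r ^ N) * r ^ j := by
        funext j; rw [pow_add]; ring
      rw [h3, tsum_mul_left, tsum_geometric_of_lt_one hr0 hr1]
    rw [← h2]; exact h1
  -- final algebra
  have h1r : (0:ℝ) < 1 - r := by linarith
  have hden : (0:ℝ) < 1 + A * r := by nlinarith
  have step1 : Sig * (1 - r) ≤ (1 - A ^ 2) * r ^ N := by
    have := mul_le_mul_of_nonneg_right htail h1r.le
    calc Sig * (1 - r) ≤ (1 - A ^ 2) * r ^ N * (1 - r)⁻¹ * (1 - r) := this
      _ = (1 - A ^ 2) * r ^ N := by field_simp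
  have hrN0 : 0 ≤ r ^ N := pow_nonneg hr0 _
  have hA2 : 0 ≤ 1 - A ^ 2 := by nlinarith
  have step2 : (1 - A ^ 2) * r ^ N * (1 + A * r) ^ 2 ≤ (1 - A ^ 2) * ((1 - r) ^ 2 * (1 + r)) := by
    have e1 : (1 + A * r) ^ 2 ≤ (1 + r) ^ 2 := by nlinarith [mul_le_mul_of_nonneg_right hA1.le hr0]
    have e2 : r ^ N * (1 + A * r) ^ 2 ≤ r ^ N * (1 + r) ^ 2 :=
      mul_le_mul_of_nonneg_left e1 hrN0
    have e3 : r ^ N * (1 + r) ^ 2 = ((1 + r) * r ^ N) * (1 + r) := by ring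
    have e4 : ((1 + r) * r ^ N) * (1 + r) ≤ (1 - r) ^ 2 * (1 + r) :=
      mul_le_mul_of_nonneg_right hroot (by linarith)
    have e5 : r ^ N * (1 + A * r) ^ 2 ≤ (1 - r) ^ 2 * (1 + r) := by
      rw [e3] at e2; linarith
    calc (1 - A ^ 2) * r ^ N * (1 + A * r) ^ 2 = (1 - A ^ 2) * (r ^ N * (1 + A * r) ^ 2) := by ring
      _ ≤ (1 - A ^ 2) * ((1 - r) ^ 2 * (1 + r)) := mul_le_mul_of_nonneg_left e5 hA2
  have step3 : t ^ 2 * (1 + A * r) ^ 2 ≤ (A + r) ^ 2 := by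
    nlinarith [mul_nonneg ht0 hden.le]
  have final : (t ^ 2 + Sig) * ((1 + A * r) ^ 2 * (1 - r)) ≤ (1 + A * r) ^ 2 * (1 - r) := by
    have s1 : Sig * (1 - r) * (1 + A * r) ^ 2 ≤ (1 - A ^ 2) * r ^ N * (1 + A * r) ^ 2 :=
      mul_le_mul_of_nonneg_right step1 (by positivity)
    have s2 : t ^ 2 * (1 + A * r) ^ 2 * (1 - r) ≤ (A + r) ^ 2 * (1 - r) :=
      mul_le_mul_of_nonneg_right step3 h1r.le
    have id1 : (A + r) ^ 2 * (1 - r) + (1 - A ^ 2) * ((1 - r) ^ 2 * (1 + r))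
        = (1 + A * r) ^ 2 * (1 - r) := by ring
    nlinarith [s1, s2, step2]
  have hpos : (0:ℝ) < (1 + A * r) ^ 2 * (1 - r) := by positivity
  have := le_of_mul_le_mul_right (by linarith [final] : (t ^ 2 + Sig) * ((1 + A * r) ^ 2 * (1 - r)) ≤ 1 * ((1 + A * r) ^ 2 * (1 - r))) hpos
  linarith
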